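/- There exists an upper triangular r×r complex matrix S with diagonal entries κ_{n-r}², κ_{n-r+1}², ..., κ_{n-1}² such that for all z: E(z) x(z) = −2πi · S · t(z), where x(z) = (π_n(z), −2πi κ_{n-1}² π_{n-1}(z))^t and t(z) = (π_{n-r}(z), ..., π_{n-1}(z))^t. In particular S is invertible. -/

import Mathlib

open MeasureTheory Polynomial Matrix

noncomputable section

/-- The coefficient `b_j` of `z^{n-j}` in `π_n`. -/
def bcoef (n : ℕ) (p : ℕ → Polynomial ℝ) (j : ℕ) : ℂ :=
  if j ≤ n then (((p n).coeff (n - j) : ℝ) : ℂ) else 0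

/-- The coefficient `c_j` of `z^{n-j}` in `−2πi κ_{n-1}² π_{n-1}`. -/
def ccoef (n : ℕ) (p : ℕ → Polynomial ℝ) (κ : ℕ → ℝ) (j : ℕ) : ℂ :=
  if j ≤ n then
    -(2 * Real.pi * Complex.I) * ((κ (n - 1) : ℝ) : ℂ) ^ 2 * (((p (n - 1)).coeff (n - j) : ℝ) : ℂ)
  else 0

/-- The truncation `b_0 z^j + b_1 z^{j-1} + ⋯ + b_j` of a coefficient sequence. -/
def Ptrunc (b : ℕ → ℂ) (j : ℕ) (z : ℂ) : ℂ :=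
  ∑ m ∈ Finset.range (j + 1), b m * z ^ (j - m)

/-- The `r×2` matrix `E(z)` whose `i`-th row is `(−Q_n^{r-i}(z), P_n^{r-i}(z))`. -/
def Emat (n r : ℕ) (p : ℕ → Polynomial ℝ) (κ : ℕ → ℝ) (z : ℂ) : Matrix (Fin r) (Fin 2) ℂ :=
  Matrix.of fun i : Fin r =>
    ![-(Ptrunc (ccoef n p κ) (r - 1 - (i : ℕ)) z), Ptrunc (bcoef n p) (r - 1 - (i : ℕ)) z]

/-- The column vector `x(z) = (π_n(z), −2πi κ_{n-1}² π_{n-1}(z))^t`. -/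
def xcol (n : ℕ) (p : ℕ → Polynomial ℝ) (κ : ℕ → ℝ) (z : ℂ) : Fin 2 → ℂ :=
  ![Polynomial.aeval z (p n),
    -(2 * Real.pi * Complex.I) * ((κ (n - 1) : ℝ) : ℂ) ^ 2 * Polynomial.aeval z (p (n - 1))]

/-- The vector `t(z) = (π_{n-r}(z), ..., π_{n-1}(z))^t`. -/
def tvecC (n r : ℕ) (p : ℕ → Polynomial ℝ) (z : ℂ) : Fin r → ℂ :=
  fun i => Polynomial.aeval z (p (n - r + (i : ℕ)))


lemma degree_lt_of_natDegree_le' {q : Polynomial ℝ} {a b : ℕ} (h : q.natDegree ≤ a)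
    (hab : a < b) : q.degree < (b : WithBot ℕ) :=
  lt_of_le_of_lt (le_trans q.degree_le_natDegree (Nat.cast_le.mpr h)) (Nat.cast_lt.mpr hab)

lemma integrable_poly (V : ℝ → ℝ) (hV : Continuous V)
    (hVint : ∀ k : ℕ, Integrable (fun x : ℝ => |x| ^ k * Real.exp (-V x)))
    (q : Polynomial ℝ) : Integrable (fun x : ℝ => q.eval x * Real.exp (-V x)) := by
  have hmono : ∀ k : ℕ, Integrable (fun x : ℝ => x ^ k * Real.exp (-V x)) := by
    intro k
    refine (hVint k).mono' ?_ ?_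
    · exact ((continuous_pow k).mul (Real.continuous_exp.comp hV.neg)).aestronglyMeasurable
    · filter_upwards with x
      rw [Real.norm_eq_abs, abs_mul, abs_pow, abs_of_pos (Real.exp_pos _)]
  have heq : (fun x : ℝ => q.eval x * Real.exp (-V x)) =
      fun x => ∑ i ∈ Finset.range (q.natDegree + 1), q.coeff i * (x ^ i * Real.exp (-V x)) := by
    funext x
    rw [Polynomial.eval_eq_sum_range, Finset.sum_mul]
    exact Finset.sum_congr rfl fun i _ => (mul_assoc _ _ _)
  rw [heq]
  exact integrable_finset_sum _ fun i _ => (hmono i).const_mul _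

lemma integrable_poly2 (V : ℝ → ℝ) (hV : Continuous V)
    (hVint : ∀ k : ℕ, Integrable (fun x : ℝ => |x| ^ k * Real.exp (-V x)))
    (q q' : Polynomial ℝ) :
    Integrable (fun x : ℝ => q.eval x * q'.eval x * Real.exp (-V x)) := by
  simpa [Polynomial.eval_mul] using integrable_poly V hV hVint (q * q')



noncomputable def Tpoly (q : Polynomial ℝ) (n j : ℕ) : Polynomial ℝ :=
  ∑ m ∈ Finset.range (j + 1), Polynomial.C (q.coeff (n - m)) * Polynomial.X ^ (j - m)

lemma coeff_Tpoly (q : Polynomial ℝ) (n j d : ℕ) (hjn : j ≤ n) :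
    (Tpoly q n j).coeff d = if d ≤ j then q.coeff (n - j + d) else 0 := by
  unfold Tpoly
  rw [Polynomial.finset_sum_coeff]
  simp only [Polynomial.coeff_C_mul, Polynomial.coeff_X_pow, mul_ite, mul_one, mul_zero]
  split_ifs with hd
  · rw [Finset.sum_eq_single (j - d)]
    · rw [if_pos (by omega)]
      congr 1
      omega
    · intro m hm hne
      rw [if_neg]
      have := Finset.mem_range.mp hm
      omega
    · intro h
      exact absurd (Finset.mem_range.mpr (by omega)) h
  · apply Finset.sum_eq_zero
    intro m hm
    rw [if_neg]
    have := Finset.mem_range.mp hm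
    omega

lemma natDegree_Tpoly_le (q : Polynomial ℝ) (n j : ℕ) (hjn : j ≤ n) :
    (Tpoly q n j).natDegree ≤ j := by
  rw [Polynomial.natDegree_le_iff_coeff_eq_zero]
  intro m hm
  rw [coeff_Tpoly q n j m hjn, if_neg (by omega)]

lemma monic_Tpoly (q : Polynomial ℝ) (n j : ℕ) (hjn : j ≤ n) (hq : q.coeff n = 1) :
    (Tpoly q n j).Monic ∧ (Tpoly q n j).natDegree = j := by
  have hc : (Tpoly q n j).coeff j = 1 := by
    rw [coeff_Tpoly q n j j hjn, if_pos le_rfl]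
    rwa [Nat.sub_add_cancel hjn]
  have hm : (Tpoly q n j).Monic :=
    Polynomial.monic_of_natDegree_le_of_coeff_eq_one j (natDegree_Tpoly_le q n j hjn) hc
  refine ⟨hm, le_antisymm (natDegree_Tpoly_le q n j hjn) ?_⟩
  exact Polynomial.le_natDegree_of_ne_zero (by rw [hc]; exact one_ne_zero)

/-- the remainder `q - T q n j * X^(n-j)` has all coefficients `≥ n - j` vanishing. -/
lemma natDegree_rem_le (q : Polynomial ℝ) (n j : ℕ) (hjn : j ≤ n) (hj1 : j + 1 ≤ n)
    (hq : q.natDegree ≤ n) :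
    (q - Tpoly q n j * Polynomial.X ^ (n - j)).natDegree ≤ n - j - 1 := by
  rw [Polynomial.natDegree_le_iff_coeff_eq_zero]
  intro k hk
  rw [Polynomial.coeff_sub, Polynomial.coeff_mul_X_pow', if_pos (by omega),
    coeff_Tpoly q n j _ hjn]
  by_cases hkn : k ≤ n
  · rw [if_pos (by omega)]
    have : n - j + (k - (n - j)) = k := by omega
    rw [this, sub_self]
  · rw [if_neg (by omega), Polynomial.coeff_eq_zero_of_natDegree_lt (by omega), sub_zero]


lemma span_aux (p : ℕ → Polynomial ℝ) (hmonic : ∀ k, (p k).Monic)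
    (hdeg : ∀ k, (p k).natDegree = k) :
    ∀ (d : ℕ) (q : Polynomial ℝ), q.natDegree < d → ∀ N : ℕ, q.degree < (N : WithBot ℕ) →
      ∃ c : ℕ → ℝ, q = ∑ m ∈ Finset.range N, Polynomial.C (c m) * p m := by
  intro d
  induction d using Nat.strong_induction_on with
  | _ d IH =>
    intro q hqd N hqN
    by_cases hq0 : q = 0
    · exact ⟨0, by simp [hq0]⟩
    set e := q.natDegree with he
    have heN : e < N := (Polynomial.natDegree_lt_iff_degree_lt hq0).mpr hqN
    set q' := q - Polynomial.C q.leadingCoeff * p e with hq'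
    have hdpe : (Polynomial.C q.leadingCoeff * p e).degree = q.degree := by
      rw [Polynomial.degree_C_mul (Polynomial.leadingCoeff_ne_zero.mpr hq0),
        Polynomial.degree_eq_natDegree (hmonic e).ne_zero,
        Polynomial.degree_eq_natDegree hq0, hdeg e]
    have hdq' : q'.degree < q.degree := by
      apply Polynomial.degree_sub_lt hdpe.symm hq0
      rw [Polynomial.leadingCoeff_mul, Polynomial.leadingCoeff_C, (hmonic e).leadingCoeff, mul_one]
    have key : ∃ c' : ℕ → ℝ, q' = ∑ m ∈ Finset.range N, Polynomial.C (c' m) * p m := by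
      by_cases hq'0 : q' = 0
      · exact ⟨0, by simp [hq'0]⟩
      · refine IH e (by omega) q' ?_ N (lt_trans hdq' hqN)
        exact (Polynomial.natDegree_lt_iff_degree_lt hq'0).mpr
          (by rwa [Polynomial.degree_eq_natDegree hq0] at hdq')
    obtain ⟨c', hc'⟩ := key
    refine ⟨fun m => if m = e then c' e + q.leadingCoeff else c' m, ?_⟩
    have hsplit : ∀ m ∈ Finset.range N,
        Polynomial.C (if m = e then c' e + q.leadingCoeff else c' m) * p m
          = Polynomial.C (c' m) * p m
            + (if m = e then Polynomial.C q.leadingCoeff * p m else 0) := by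
      intro m _
      split_ifs with h
      · subst h; rw [Polynomial.C_add, add_mul]
      · rw [add_zero]
    rw [Finset.sum_congr rfl hsplit, Finset.sum_add_distrib,
      Finset.sum_ite_eq' (Finset.range N) e (fun m => Polynomial.C q.leadingCoeff * p m),
      if_pos (Finset.mem_range.mpr heN), ← hc']
    simp [hq']

lemma pairing (V : ℝ → ℝ) (hV : Continuous V)
    (hVint : ∀ k : ℕ, Integrable (fun x : ℝ => |x| ^ k * Real.exp (-V x)))
    (p : ℕ → Polynomial ℝ)
    (horth : ∀ k m, k ≠ m → ∫ x : ℝ, (p k).eval x * (p m).eval x * Real.exp (-V x) = 0)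
    (κ : ℕ → ℝ)
    (hκ : ∀ k, ∫ x : ℝ, ((p k).eval x) ^ 2 * Real.exp (-V x) = ((κ k) ^ 2)⁻¹)
    (N : ℕ) (c : ℕ → ℝ) (q : Polynomial ℝ)
    (hc : q = ∑ m ∈ Finset.range N, Polynomial.C (c m) * p m)
    (m0 : ℕ) (hm0 : m0 < N) :
    ∫ x : ℝ, q.eval x * (p m0).eval x * Real.exp (-V x) = c m0 * ((κ m0) ^ 2)⁻¹ := by
  have hfun : ∀ x : ℝ, q.eval x * (p m0).eval x * Real.exp (-V x)
      = ∑ m ∈ Finset.range N, c m * ((p m).eval x * (p m0).eval x * Real.exp (-V x)) := by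
    intro x
    rw [hc]
    simp only [Polynomial.eval_finset_sum, Polynomial.eval_mul, Polynomial.eval_C,
      Finset.sum_mul]
    exact Finset.sum_congr rfl fun m _ => by ring
  rw [MeasureTheory.integral_congr_ae (Filter.Eventually.of_forall hfun)]
  rw [MeasureTheory.integral_finset_sum _
    (fun m _ => ((integrable_poly2 V hV hVint (p m) (p m0)).const_mul (c m)))]
  rw [Finset.sum_eq_single m0]
  · rw [MeasureTheory.integral_const_mul]
    have : ∀ x : ℝ, (p m0).eval x * (p m0).eval x * Real.exp (-V x)
        = ((p m0).eval x) ^ 2 * Real.exp (-V x) := fun x => by ring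
    rw [MeasureTheory.integral_congr_ae (Filter.Eventually.of_forall this), hκ]
  · intro m _ hne
    rw [MeasureTheory.integral_const_mul, horth m m0 hne, mul_zero]
  · intro h
    exact absurd (Finset.mem_range.mpr hm0) h

lemma orth_low (V : ℝ → ℝ) (hV : Continuous V)
    (hVint : ∀ k : ℕ, Integrable (fun x : ℝ => |x| ^ k * Real.exp (-V x)))
    (p : ℕ → Polynomial ℝ) (hmonic : ∀ k, (p k).Monic)
    (hdeg : ∀ k, (p k).natDegree = k)
    (horth : ∀ k m, k ≠ m → ∫ x : ℝ, (p k).eval x * (p m).eval x * Real.exp (-V x) = 0)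
    (k : ℕ) (q : Polynomial ℝ) (hq : q.degree < (k : WithBot ℕ)) :
    ∫ x : ℝ, (p k).eval x * q.eval x * Real.exp (-V x) = 0 := by
  obtain ⟨c, hc⟩ := span_aux p hmonic hdeg (q.natDegree + 1) q (Nat.lt_succ_self _) k hq
  have hfun : ∀ x : ℝ, (p k).eval x * q.eval x * Real.exp (-V x)
      = ∑ m ∈ Finset.range k, c m * ((p k).eval x * (p m).eval x * Real.exp (-V x)) := by
    intro x
    rw [hc]
    simp only [Polynomial.eval_finset_sum, Polynomial.eval_mul, Polynomial.eval_C,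
      Finset.mul_sum]
    rw [Finset.sum_mul]
    exact Finset.sum_congr rfl fun m _ => by ring
  rw [MeasureTheory.integral_congr_ae (Filter.Eventually.of_forall hfun)]
  rw [MeasureTheory.integral_finset_sum _
    (fun m _ => ((integrable_poly2 V hV hVint (p k) (p m)).const_mul (c m)))]
  apply Finset.sum_eq_zero
  intro m hm
  rw [MeasureTheory.integral_const_mul, horth k m (by have := Finset.mem_range.mp hm; omega),
    mul_zero]

lemma Fj_pairing (V : ℝ → ℝ) (hV : Continuous V)
    (hVint : ∀ k : ℕ, Integrable (fun x : ℝ => |x| ^ k * Real.exp (-V x)))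
    (p : ℕ → Polynomial ℝ) (hmonic : ∀ k, (p k).Monic)
    (hdeg : ∀ k, (p k).natDegree = k)
    (horth : ∀ k m, k ≠ m → ∫ x : ℝ, (p k).eval x * (p m).eval x * Real.exp (-V x) = 0)
    (κ : ℕ → ℝ)
    (hκ : ∀ k, ∫ x : ℝ, ((p k).eval x) ^ 2 * Real.exp (-V x) = ((κ k) ^ 2)⁻¹)
    (n j m0 : ℕ) (hj : j + 1 ≤ n) (hm0 : m0 ≤ n - 1 - j) :
    ∫ x : ℝ, (Tpoly (p n) n j * p (n - 1) - Tpoly (p (n - 1)) n j * p n).eval x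
        * (p m0).eval x * Real.exp (-V x)
      = if m0 = n - 1 - j then ((κ (n - 1)) ^ 2)⁻¹ else 0 := by
  have hfun : ∀ x : ℝ,
      (Tpoly (p n) n j * p (n - 1) - Tpoly (p (n - 1)) n j * p n).eval x
          * (p m0).eval x * Real.exp (-V x)
        = (p (n - 1)).eval x * (Tpoly (p n) n j * p m0).eval x * Real.exp (-V x)
          - (p n).eval x * (Tpoly (p (n - 1)) n j * p m0).eval x * Real.exp (-V x) := by
    intro x
    simp only [Polynomial.eval_sub, Polynomial.eval_mul]
    ring
  rw [MeasureTheory.integral_congr_ae (Filter.Eventually.of_forall hfun),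
    MeasureTheory.integral_sub (integrable_poly2 V hV hVint _ _) (integrable_poly2 V hV hVint _ _)]
  have hdT' : (Tpoly (p (n - 1)) n j * p m0).natDegree ≤ j + m0 :=
    le_trans (Polynomial.natDegree_mul_le)
      (add_le_add (natDegree_Tpoly_le _ n j (by omega)) (le_of_eq (hdeg m0)))
  have hsecond : ∫ x : ℝ, (p n).eval x * (Tpoly (p (n - 1)) n j * p m0).eval x
      * Real.exp (-V x) = 0 :=
    orth_low V hV hVint p hmonic hdeg horth n _
      (degree_lt_of_natDegree_le' (le_trans hdT' (show j + m0 ≤ n - 1 by omega))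
        (show n - 1 < n by omega))
  rw [hsecond, sub_zero]
  have hdT : (Tpoly (p n) n j * p m0).natDegree ≤ j + m0 :=
    le_trans (Polynomial.natDegree_mul_le)
      (add_le_add (natDegree_Tpoly_le _ n j (by omega)) (le_of_eq (hdeg m0)))
  by_cases htop : m0 = n - 1 - j
  · rw [if_pos htop]
    have h1 : (p n).coeff n = 1 := by
      have := (hmonic n).coeff_natDegree
      rwa [hdeg n] at this
    have hTm := monic_Tpoly (p n) n j (by omega) h1
    have hGm : (Tpoly (p n) n j * p m0).Monic := hTm.1.mul (hmonic m0)
    have hGdeg : (Tpoly (p n) n j * p m0).natDegree = n - 1 := by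
      rw [hTm.1.natDegree_mul (hmonic m0), hTm.2, hdeg m0, htop]; omega
    have hsplit2 : ∀ x : ℝ,
        (p (n - 1)).eval x * (Tpoly (p n) n j * p m0).eval x * Real.exp (-V x)
          = ((p (n - 1)).eval x) ^ 2 * Real.exp (-V x)
            + (p (n - 1)).eval x * ((Tpoly (p n) n j * p m0) - p (n - 1)).eval x
              * Real.exp (-V x) := by
      intro x
      simp only [Polynomial.eval_sub]
      ring
    have hint1 : Integrable (fun x : ℝ => ((p (n - 1)).eval x) ^ 2 * Real.exp (-V x)) := by
      have := integrable_poly2 V hV hVint (p (n - 1)) (p (n - 1))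
      simpa [pow_two] using this
    have hdsub : ((Tpoly (p n) n j * p m0) - p (n - 1)).degree < ((n - 1 : ℕ) : WithBot ℕ) := by
      have hd1 : (Tpoly (p n) n j * p m0).degree = (p (n - 1)).degree := by
        rw [Polynomial.degree_eq_natDegree hGm.ne_zero,
          Polynomial.degree_eq_natDegree (hmonic (n - 1)).ne_zero, hGdeg, hdeg]
      have := Polynomial.degree_sub_lt hd1 hGm.ne_zero
        (by rw [hGm.leadingCoeff, (hmonic (n - 1)).leadingCoeff])
      rwa [Polynomial.degree_eq_natDegree hGm.ne_zero, hGdeg] at this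
    rw [MeasureTheory.integral_congr_ae (Filter.Eventually.of_forall hsplit2),
      MeasureTheory.integral_add hint1 (integrable_poly2 V hV hVint _ _), hκ (n - 1),
      orth_low V hV hVint p hmonic hdeg horth (n - 1) _ hdsub, add_zero]
  · rw [if_neg htop]
    exact orth_low V hV hVint p hmonic hdeg horth (n - 1) _
      (degree_lt_of_natDegree_le' (le_trans hdT (show j + m0 ≤ n - 2 by omega))
        (show n - 2 < n - 1 by omega))

lemma ptrunc_bcoef (n j : ℕ) (hjn : j ≤ n) (p : ℕ → Polynomial ℝ) (z : ℂ) :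
    Ptrunc (bcoef n p) j z = Polynomial.aeval z (Tpoly (p n) n j) := by
  unfold Ptrunc bcoef Tpoly
  rw [map_sum]
  refine Finset.sum_congr rfl fun m hm => ?_
  have hmn : m ≤ n := le_trans (Nat.lt_succ_iff.mp (Finset.mem_range.mp hm)) hjn
  rw [if_pos hmn, _root_.map_mul, Polynomial.aeval_C, map_pow, Polynomial.aeval_X]
  simp

lemma ptrunc_ccoef (n j : ℕ) (hjn : j ≤ n) (p : ℕ → Polynomial ℝ) (κ : ℕ → ℝ) (z : ℂ) :
    Ptrunc (ccoef n p κ) j z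
      = -(2 * Real.pi * Complex.I) * ((κ (n - 1) : ℝ) : ℂ) ^ 2
          * Polynomial.aeval z (Tpoly (p (n - 1)) n j) := by
  unfold Ptrunc ccoef Tpoly
  rw [map_sum, Finset.mul_sum]
  refine Finset.sum_congr rfl fun m hm => ?_
  have hmn : m ≤ n := le_trans (Nat.lt_succ_iff.mp (Finset.mem_range.mp hm)) hjn
  rw [if_pos hmn, _root_.map_mul, Polynomial.aeval_C, map_pow, Polynomial.aeval_X]
  simp
  ring


/-- There exists an upper triangular `r×r` matrix `S` with diagonal entries
`κ_{n-r}², ..., κ_{n-1}²` such that `E(z) x(z) = −2πi · S · t(z)` for all `z`;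
in particular `S` is invertible. -/
theorem exists_triangular_S
    (n r : ℕ) (hr : 1 ≤ r) (hnr : r ≤ n)
    (V : ℝ → ℝ) (hV : Continuous V)
    (hVint : ∀ k : ℕ, MeasureTheory.Integrable (fun x : ℝ => |x| ^ k * Real.exp (-V x)))
    (p : ℕ → Polynomial ℝ)
    (hmonic : ∀ k, (p k).Monic)
    (hdeg : ∀ k, (p k).natDegree = k)
    (horth : ∀ k m, k ≠ m → ∫ x : ℝ, (p k).eval x * (p m).eval x * Real.exp (-V x) = 0)
    (κ : ℕ → ℝ) (hκpos : ∀ k, 0 < κ k)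
    (hκ : ∀ k, ∫ x : ℝ, ((p k).eval x) ^ 2 * Real.exp (-V x) = ((κ k) ^ 2)⁻¹)
 :
    ∃ S : Matrix (Fin r) (Fin r) ℂ,
      S.BlockTriangular id ∧
      (∀ i : Fin r, S i i = (((κ (n - r + (i : ℕ))) ^ 2 : ℝ) : ℂ)) ∧
      (∀ z : ℂ, ∀ i : Fin r,
        ∑ k : Fin 2, Emat n r p κ z i k * xcol n p κ z k
          = -(2 * Real.pi * Complex.I) * ∑ m : Fin r, S i m * tvecC n r p z m) ∧
      IsUnit S := by
  have hn1 : 1 ≤ n := le_trans hr hnr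
  set F : ℕ → Polynomial ℝ :=
    fun j => Tpoly (p n) n j * p (n - 1) - Tpoly (p (n - 1)) n j * p n with hF
  have hFdeg : ∀ j, j + 1 ≤ n → (F j).natDegree ≤ n - 1 := by
    intro j hj
    have hR : (p n - Tpoly (p n) n j * Polynomial.X ^ (n - j)).natDegree ≤ n - j - 1 :=
      natDegree_rem_le (p n) n j (by omega) hj (le_of_eq (hdeg n))
    have hR' : (p (n - 1) - Tpoly (p (n - 1)) n j * Polynomial.X ^ (n - j)).natDegree
        ≤ n - j - 1 :=
      natDegree_rem_le (p (n - 1)) n j (by omega) hj (by rw [hdeg]; omega)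
    have hT1 := natDegree_Tpoly_le (p n) n j (show j ≤ n by omega)
    have hT2 := natDegree_Tpoly_le (p (n - 1)) n j (show j ≤ n by omega)
    have hFeq : F j
        = Tpoly (p n) n j * (p (n - 1) - Tpoly (p (n - 1)) n j * Polynomial.X ^ (n - j))
          - Tpoly (p (n - 1)) n j * (p n - Tpoly (p n) n j * Polynomial.X ^ (n - j)) := by
      simp only [hF]; ring
    rw [hFeq]
    refine le_trans (Polynomial.natDegree_sub_le _ _) (max_le ?_ ?_)
    · exact le_trans Polynomial.natDegree_mul_le (by omega)
    · exact le_trans Polynomial.natDegree_mul_le (by omega)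
  have key : ∀ i : Fin r, ∃ c : ℕ → ℝ,
      F (r - 1 - (i : ℕ)) = ∑ m ∈ Finset.range n, Polynomial.C (c m) * p m ∧
      ∀ m0 : ℕ, m0 ≤ n - 1 - (r - 1 - (i : ℕ)) →
        c m0 = if m0 = n - 1 - (r - 1 - (i : ℕ))
          then (κ m0) ^ 2 * ((κ (n - 1)) ^ 2)⁻¹ else 0 := by
    intro i
    have hi : (i : ℕ) < r := i.isLt
    set j := r - 1 - (i : ℕ) with hjdef
    have hj : j + 1 ≤ n := by omega
    obtain ⟨c, hc⟩ := span_aux p hmonic hdeg ((F j).natDegree + 1) (F j)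
      (Nat.lt_succ_self _) n (degree_lt_of_natDegree_le' (hFdeg j hj) (by omega))
    refine ⟨c, hc, ?_⟩
    intro m0 hm0
    have hpair := pairing V hV hVint p horth κ hκ n c (F j) hc m0 (by omega)
    have hval := Fj_pairing V hV hVint p hmonic hdeg horth κ hκ n j m0 hj hm0
    have hFj : F j = Tpoly (p n) n j * p (n - 1) - Tpoly (p (n - 1)) n j * p n := by
      simp only [hF]
    rw [hFj] at hpair
    have h4 : c m0 * ((κ m0) ^ 2)⁻¹
        = if m0 = n - 1 - j then ((κ (n - 1)) ^ 2)⁻¹ else 0 := hpair.symm.trans hval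
    have hκ0 : (κ m0) ^ 2 ≠ 0 := pow_ne_zero _ (hκpos m0).ne'
    have h3 : c m0 = (if m0 = n - 1 - j then ((κ (n - 1)) ^ 2)⁻¹ else 0) * (κ m0) ^ 2 := by
      rw [← h4, inv_mul_cancel_right₀ hκ0]
    rw [h3]
    split_ifs with h5
    · ring
    · ring
  choose c hc1 hc2 using key
  set S : Matrix (Fin r) (Fin r) ℂ :=
    Matrix.of (fun i m : Fin r =>
      (((κ (n - 1)) ^ 2 * c i (n - r + (m : ℕ)) : ℝ) : ℂ)) with hSdef
  have hbt : S.BlockTriangular id := by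
    intro i m hlt
    have hi : (i : ℕ) < r := i.isLt
    have hm : (m : ℕ) < (i : ℕ) := hlt
    have hz := hc2 i (n - r + (m : ℕ)) (by omega)
    rw [if_neg (by omega)] at hz
    simp only [hSdef, Matrix.of_apply, hz, mul_zero, Complex.ofReal_zero]
  have hdiag : ∀ i : Fin r, S i i = (((κ (n - r + (i : ℕ))) ^ 2 : ℝ) : ℂ) := by
    intro i
    have hi : (i : ℕ) < r := i.isLt
    have hz := hc2 i (n - r + (i : ℕ)) (by omega)
    rw [if_pos (by omega)] at hz
    have hne : (κ (n - 1)) ^ 2 ≠ 0 := pow_ne_zero _ (hκpos (n - 1)).ne'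
    simp only [hSdef, Matrix.of_apply, hz]
    norm_cast
    field_simp
    exact mul_div_cancel_left₀ _ (hκpos (n - 1)).ne'
  have hid : ∀ z : ℂ, ∀ i : Fin r,
      ∑ k : Fin 2, Emat n r p κ z i k * xcol n p κ z k
        = -(2 * Real.pi * Complex.I) * ∑ m : Fin r, S i m * tvecC n r p z m := by
    intro z i
    have hi : (i : ℕ) < r := i.isLt
    set j := r - 1 - (i : ℕ) with hjdef
    have hj : j + 1 ≤ n := by omega
    have hrow : ∑ k : Fin 2, Emat n r p κ z i k * xcol n p κ z k
        = -(2 * Real.pi * Complex.I) * ((κ (n - 1) : ℝ) : ℂ) ^ 2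
          * Polynomial.aeval z (F j) := by
      rw [Fin.sum_univ_two]
      have e0 : Emat n r p κ z i 0 = -(Ptrunc (ccoef n p κ) j z) := rfl
      have e1 : Emat n r p κ z i 1 = Ptrunc (bcoef n p) j z := rfl
      have x0 : xcol n p κ z 0 = Polynomial.aeval z (p n) := rfl
      have x1 : xcol n p κ z 1
          = -(2 * Real.pi * Complex.I) * ((κ (n - 1) : ℝ) : ℂ) ^ 2
            * Polynomial.aeval z (p (n - 1)) := rfl
      rw [e0, e1, x0, x1, ptrunc_ccoef n j (by omega) p κ z, ptrunc_bcoef n j (by omega) p z]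
      have hFj : F j = Tpoly (p n) n j * p (n - 1) - Tpoly (p (n - 1)) n j * p n := by
        simp only [hF]
      rw [hFj, map_sub, _root_.map_mul, _root_.map_mul]
      ring
    rw [hrow]
    have hexp : Polynomial.aeval z (F j) = ∑ m : Fin r,
        ((c i (n - r + (m : ℕ)) : ℝ) : ℂ)
          * Polynomial.aeval z (p (n - r + (m : ℕ))) := by
      have hc1i := hc1 i
      rw [← hjdef] at hc1i
      rw [hc1i, map_sum]
      simp only [_root_.map_mul, Polynomial.aeval_C]
      rw [Finset.range_eq_Ico,
        ← Finset.sum_Ico_consecutive _ (Nat.zero_le (n - r)) (Nat.sub_le n r)]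
      have hzero : ∑ m ∈ Finset.Ico 0 (n - r),
          (algebraMap ℝ ℂ) (c i m) * Polynomial.aeval z (p m) = 0 := by
        apply Finset.sum_eq_zero
        intro m hm
        have hmlt : m < n - r := (Finset.mem_Ico.mp hm).2
        have hz := hc2 i m (by omega)
        rw [if_neg (by omega)] at hz
        rw [hz]
        simp
      rw [hzero, zero_add, Finset.sum_Ico_eq_sum_range]
      have hnr' : n - (n - r) = r := by omega
      rw [hnr', ← Fin.sum_univ_eq_sum_range]
      refine Finset.sum_congr rfl fun m _ => ?_
      simp [Algebra.algebraMap_eq_smul_one]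
    rw [hexp, Finset.mul_sum, Finset.mul_sum]
    refine Finset.sum_congr rfl fun m _ => ?_
    simp only [hSdef, Matrix.of_apply, tvecC]
    push_cast
    ring
  have hunit : IsUnit S := by
    rw [Matrix.isUnit_iff_isUnit_det, Matrix.det_of_upperTriangular hbt]
    rw [isUnit_iff_ne_zero]
    rw [Finset.prod_ne_zero_iff]
    intro i _
    rw [hdiag i]
    exact Complex.ofReal_ne_zero.mpr (pow_ne_zero 2 (hκpos _).ne')
  exact ⟨S, hbt, hdiag, hid, hunit⟩

end
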